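/- Let d ≥ 1 and n ≥ 1. Consider adaptively chosen evaluation points: a fixed point x_1 ∈ [0,1]^d and maps ψ_i : ℝ^i → [0,1]^d for i = 1, …, n−1, so that for a continuous f : [0,1]^d → ℝ the points are defined recursively by x_{i+1}(f) = ψ_i(f(x_1), …, f(x_i(f))). Then for every algorithm φ : ℝ^n → ℝ, sup over all continuous f : [0,1]^d → ℝ with |f(t)| ≤ 1 for all t ∈ [0,1]^d of |∫_{[0,1]^d} f(t) dt − φ(f(x_1), …, f(x_n(f)))| ≥ 1. Thus adaption does not help: integration of continuous functions cannot be solved in the worst case even with adaptively chosen function values. -/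

import Mathlib

open MeasureTheory

lemma one_sub_prod_le_sum {ι : Type*} [DecidableEq ι] (s : Finset ι) (a : ι → ℝ)
    (h0 : ∀ i ∈ s, 0 ≤ a i) (h1 : ∀ i ∈ s, a i ≤ 1) :
    1 - ∏ i ∈ s, a i ≤ ∑ i ∈ s, (1 - a i) := by
  induction s using Finset.induction with
  | empty => simp
  | @insert j s' hjs ih =>
    rw [Finset.prod_insert hjs, Finset.sum_insert hjs]
    have h0j := h0 j (Finset.mem_insert_self _ _)
    have h1j := h1 j (Finset.mem_insert_self _ _)
    have h0' : ∀ i ∈ s', 0 ≤ a i := fun i hi => h0 i (Finset.mem_insert_of_mem hi)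
    have h1' : ∀ i ∈ s', a i ≤ 1 := fun i hi => h1 i (Finset.mem_insert_of_mem hi)
    have ihs := ih h0' h1'
    have hp0 : 0 ≤ ∏ i ∈ s', a i := Finset.prod_nonneg h0'
    have hp1 : ∏ i ∈ s', a i ≤ 1 := Finset.prod_le_one h0' h1'
    nlinarith

theorem stmt_1 (d n : ℕ) (hd : 1 ≤ d) (hn : 1 ≤ n)
    (x₁ : Fin d → ℝ) (hx₁ : x₁ ∈ Set.Icc (0 : Fin d → ℝ) 1)
    (ψ : (i : ℕ) → (Fin (i + 1) → ℝ) → (Fin d → ℝ))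
    (hψ : ∀ i v, ψ i v ∈ Set.Icc (0 : Fin d → ℝ) 1)
    (pt : ((Fin d → ℝ) → ℝ) → ℕ → (Fin d → ℝ))
    (hpt0 : ∀ f, pt f 0 = x₁)
    (hptsucc : ∀ f i, pt f (i + 1) = ψ i (fun j : Fin (i + 1) => f (pt f j.1)))
    (φ : (Fin n → ℝ) → ℝ) :
    ∀ c : ℝ, c < 1 →
      ∃ f : (Fin d → ℝ) → ℝ, Continuous f ∧
        (∀ t ∈ Set.Icc (0 : Fin d → ℝ) 1, |f t| ≤ 1) ∧
        c < |(∫ t in Set.Icc (0 : Fin d → ℝ) 1, f t) - φ (fun i => f (pt f i.1))| := by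
  intro c hc
  set p : ℕ → (Fin d → ℝ) := pt (fun _ => 0) with hp
  -- the adaptive points coincide with those of the zero function for any f vanishing there
  have key : ∀ f : (Fin d → ℝ) → ℝ, (∀ i, i < n → f (p i) = 0) →
      ∀ i, i < n → pt f i = p i := by
    intro f hf i
    induction i using Nat.strong_induction_on with
    | _ i ih =>
      intro hi
      match i with
      | 0 => rw [hp, hpt0, hpt0]
      | Nat.succ k =>
        rw [hp, hptsucc f, hptsucc (fun _ => 0)]
        have h1 : (fun j : Fin (k+1) => f (pt f j.1)) = fun _ => (0:ℝ) := by
          funext j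
          have hjn : (j : ℕ) < n := lt_trans j.2 hi
          rw [ih j.1 j.2 hjn]
          exact hf _ hjn
        rw [h1]
  -- choose a small radius
  have hn' : (0:ℝ) < n := by exact_mod_cast hn
  set r : ℝ := min (1 / (4 * n)) ((1 - c) / (4 * n)) with hr
  have hr0 : 0 < r := lt_min (by positivity) (by apply div_pos (by linarith) (by positivity))
  have hn'' : (1:ℝ) ≤ n := by exact_mod_cast hn
  have hrn1 : r * (4 * n) ≤ 1 := by
    rw [← le_div_iff₀ (by positivity)]
    exact min_le_left _ _
  have hrnc : r * (4 * n) ≤ 1 - c := by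
    rw [← le_div_iff₀ (by positivity)]
    exact min_le_right _ _
  have h2r1 : 2 * r ≤ 1 := by nlinarith
  have hpow : (2*r)^d ≤ 2*r := by
    calc (2*r)^d ≤ (2*r)^1 := pow_le_pow_of_le_one (by positivity) h2r1 hd
      _ = 2*r := pow_one _
  have hbd : (n:ℝ) * (2 * r) ^ d ≤ 2 * (r * n) :=
    le_trans (mul_le_mul_of_nonneg_left hpow hn'.le) (by ring_nf; nlinarith)
  have hrsmall : (n:ℝ) * (2 * r) ^ d < 1 - c := by nlinarith
  have hrhalf : (n:ℝ) * (2 * r) ^ d ≤ 1/2 := by nlinarith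
  -- the fooling function
  set g : (Fin d → ℝ) → ℝ := fun t => ∏ i : Fin n, min 1 (dist t (p i.1) / r) with hg
  have hgcont : Continuous g := by
    apply continuous_finset_prod
    intro i _
    exact continuous_const.min ((continuous_id.dist continuous_const).div_const r)
  have hfac0 : ∀ t (i : Fin n), 0 ≤ min 1 (dist t (p i.1) / r) :=
    fun t i => le_min zero_le_one (div_nonneg dist_nonneg hr0.le)
  have hfac1 : ∀ t (i : Fin n), min 1 (dist t (p i.1) / r) ≤ 1 := fun t i => min_le_left _ _
  have hg0 : ∀ t, 0 ≤ g t := fun t => Finset.prod_nonneg fun i _ => hfac0 t i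
  have hg1 : ∀ t, g t ≤ 1 := fun t =>
    Finset.prod_le_one (fun i _ => hfac0 t i) (fun i _ => hfac1 t i)
  have hgp : ∀ i, i < n → g (p i) = 0 := by
    intro i hi
    apply Finset.prod_eq_zero (Finset.mem_univ (⟨i, hi⟩ : Fin n))
    simp [dist_self]
  -- the algorithm sees only zeros
  have hval : ∀ (f : (Fin d → ℝ) → ℝ), (∀ i, i < n → f (p i) = 0) →
      (fun i : Fin n => f (pt f i.1)) = fun _ => (0:ℝ) := by
    intro f hf
    funext i
    rw [key f hf i.1 i.2, hf _ i.2]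
  -- integral lower bound
  have hIcc : MeasurableSet (Set.Icc (0 : Fin d → ℝ) 1) := measurableSet_Icc
  have hvol1 : volume (Set.Icc (0 : Fin d → ℝ) 1) = 1 := by
    rw [Real.volume_Icc_pi]; simp
  have hvol : (volume (Set.Icc (0 : Fin d → ℝ) 1)).toReal = 1 := by rw [hvol1]; simp
  have hvolfin : volume (Set.Icc (0 : Fin d → ℝ) 1) < ⊤ := by rw [hvol1]; simp
  have hIntg : IntegrableOn g (Set.Icc (0 : Fin d → ℝ) 1) :=
    hgcont.continuousOn.integrableOn_compact isCompact_Icc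
  set ind : Fin n → (Fin d → ℝ) → ℝ :=
    fun i => (Metric.closedBall (p i.1) r).indicator (fun _ => (1:ℝ)) with hind'
  have hind : ∀ i : Fin n, Integrable (ind i) := by
    intro i
    rw [hind', integrable_indicator_iff measurableSet_closedBall]
    refine integrableOn_const ?_
    rw [Real.volume_pi_closedBall _ hr0.le]; exact ENNReal.ofReal_ne_top
  have hptw : ∀ t, 1 - g t ≤ ∑ i : Fin n, ind i t := by
    intro t
    refine le_trans (one_sub_prod_le_sum Finset.univ _ (fun i _ => hfac0 t i)
      (fun i _ => hfac1 t i)) ?_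
    apply Finset.sum_le_sum
    intro i _
    by_cases hball : t ∈ Metric.closedBall (p i.1) r
    · rw [hind']; simp only [Set.indicator_of_mem hball]
      linarith [hfac0 t i]
    · rw [hind']; simp only [Set.indicator_of_notMem hball]
      have h1d : 1 ≤ dist t (p i.1) / r := by
        rw [Metric.mem_closedBall, not_le] at hball
        rw [le_div_iff₀ hr0]; linarith
      simp [min_eq_left h1d]
  have hint1 : IntegrableOn (fun t => 1 - g t) (Set.Icc (0 : Fin d → ℝ) 1) :=
    (integrableOn_const hvolfin.ne).sub hIntg
  have hint2 : IntegrableOn (fun t => ∑ i : Fin n, ind i t) (Set.Icc (0 : Fin d → ℝ) 1) :=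
    (integrable_finset_sum _ (fun i _ => hind i)).integrableOn
  have hmono := setIntegral_mono_on hint1 hint2 hIcc (fun t _ => hptw t)
  have hL : (∫ t in Set.Icc (0 : Fin d → ℝ) 1, (1 - g t)) =
      1 - ∫ t in Set.Icc (0 : Fin d → ℝ) 1, g t := by
    rw [integral_sub (integrableOn_const hvolfin.ne : IntegrableOn (fun _ => (1:ℝ)) (Set.Icc (0 : Fin d → ℝ) 1) volume) hIntg, setIntegral_const]
    simp [Measure.real, hvol]
  have hR : (∫ t in Set.Icc (0 : Fin d → ℝ) 1, ∑ i : Fin n, ind i t) ≤ (n:ℝ) * (2*r)^d := by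
    rw [integral_finset_sum _ (fun i _ => (hind i).integrableOn)]
    have hterm : ∀ i : Fin n, (∫ t in Set.Icc (0 : Fin d → ℝ) 1, ind i t) ≤ (2*r)^d := by
      intro i
      rw [hind', setIntegral_indicator measurableSet_closedBall, setIntegral_const, smul_eq_mul,
        mul_one]
      have hmle : volume (Set.Icc (0 : Fin d → ℝ) 1 ∩ Metric.closedBall (p i.1) r)
          ≤ volume (Metric.closedBall (p i.1) r) := measure_mono Set.inter_subset_right
      have hvb : (volume (Metric.closedBall (p i.1) r)).toReal = (2*r)^d := by
        rw [Real.volume_pi_closedBall _ hr0.le, ENNReal.toReal_ofReal (by positivity)]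
        simp
      calc (volume (Set.Icc (0 : Fin d → ℝ) 1 ∩ Metric.closedBall (p i.1) r)).toReal
          ≤ (volume (Metric.closedBall (p i.1) r)).toReal := by
            apply ENNReal.toReal_mono _ hmle
            rw [Real.volume_pi_closedBall _ hr0.le]; exact ENNReal.ofReal_ne_top
        _ = (2*r)^d := hvb
    calc (∑ i : Fin n, ∫ t in Set.Icc (0 : Fin d → ℝ) 1, ind i t)
        ≤ ∑ _i : Fin n, (2*r)^d := Finset.sum_le_sum (fun i _ => hterm i)
      _ = (n:ℝ) * (2*r)^d := by rw [Finset.sum_const]; simp [mul_comm]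
  set I : ℝ := ∫ t in Set.Icc (0 : Fin d → ℝ) 1, g t with hI'
  have hI : 1 - (n:ℝ) * (2*r)^d ≤ I := by
    rw [hL] at hmono; linarith
  have hIc : c < I := by linarith
  have hIhalf : 1/2 ≤ I := by linarith
  set a : ℝ := φ (fun _ => 0) with ha
  by_cases hsign : a ≤ 0
  · refine ⟨g, hgcont, fun t _ => abs_le.2 ⟨by linarith [hg0 t], hg1 t⟩, ?_⟩
    rw [hval g hgp, ← ha, ← hI']
    rw [abs_of_pos (by linarith)]
    linarith
  · push_neg at hsign
    refine ⟨-g, hgcont.neg, fun t _ => ?_, ?_⟩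
    · rw [Pi.neg_apply, abs_neg]; exact abs_le.2 ⟨by linarith [hg0 t], hg1 t⟩
    · have hgp' : ∀ i, i < n → (-g) (p i) = 0 := by
        intro i hi; simp [hgp i hi]
      rw [hval (-g) hgp', ← ha]
      have hneg : (∫ t in Set.Icc (0 : Fin d → ℝ) 1, (-g) t) = -I := by
        simp [hI', integral_neg]
      rw [hneg, abs_of_neg (by linarith)]
      linarith
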